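/- Vanishing of matrix elements across large distance: let H be a bounded self-adjoint operator and P, Q orthogonal projections such that P H^k Q_n = 0 for all n > k, where (Q_n) is a family of projections. Then for any continuous function g and any t, lim_{n→∞} ‖P g(H) e^{itH} Q_n‖ = 0. -/

import Mathlib

open Filter

noncomputable section

/-- A self-adjoint idempotent continuous linear map has norm at most one. -/
lemma proj_norm_le_one {ℋ : Type*} [NormedAddCommGroup ℋ] [InnerProductSpace ℂ ℋ]
    [CompleteSpace ℋ] {Q : ℋ →L[ℂ] ℋ} (hsa : IsSelfAdjoint Q) (hid : IsIdempotentElem Q) :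
    ‖Q‖ ≤ 1 := by
  refine Q.opNorm_le_bound zero_le_one fun x => ?_
  rw [one_mul]
  rcases eq_or_ne (‖Q x‖) 0 with h0 | h0
  · rw [h0]; positivity
  · have key : (inner ℂ (Q x) (Q x) : ℂ) = inner ℂ x (Q x) := by
      have h1 : (inner ℂ (Q x) (Q x) : ℂ) = inner ℂ x (Q (Q x)) := by
        rw [← ContinuousLinearMap.adjoint_inner_left Q (Q x) x, hsa.adjoint_eq]
      have h2 : Q (Q x) = Q x := by
        conv_rhs => rw [← hid]
        rfl
      rw [h1, h2]
    have hsq : ‖Q x‖ ^ 2 = ‖(inner ℂ (Q x) (Q x) : ℂ)‖ := by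
      rw [inner_self_eq_norm_sq_to_K (𝕜 := ℂ)]
      simp [sq_abs]
    have : ‖Q x‖ ^ 2 ≤ ‖x‖ * ‖Q x‖ := by
      rw [hsq, key]
      exact norm_inner_le_norm x (Q x)
    have hpos : 0 < ‖Q x‖ := lt_of_le_of_ne (norm_nonneg _) (Ne.symm h0)
    nlinarith

/-- Vanishing of matrix elements across large distance: let `H` be a bounded
self-adjoint operator and `P`, `Qₙ` orthogonal projections such that `P H^k Qₙ = 0` for all
`n > k`.  Then for any continuous function `g` and any `t`,
`lim_{n→∞} ‖P g(H) e^{itH} Qₙ‖ = 0`. -/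
theorem matrix_elements_vanish_far_away
    {ℋ : Type*} [NormedAddCommGroup ℋ] [InnerProductSpace ℂ ℋ] [CompleteSpace ℋ]
    (H P : ℋ →L[ℂ] ℋ) (Q : ℕ → (ℋ →L[ℂ] ℋ))
    (hH : IsSelfAdjoint H)
    (hP : IsSelfAdjoint P ∧ IsIdempotentElem P)
    (hQ : ∀ n, IsSelfAdjoint (Q n) ∧ IsIdempotentElem (Q n))
    (hstruct : ∀ k n : ℕ, k < n → P * H ^ k * Q n = 0)
    (g : ℂ → ℂ) (hg : Continuous g) (t : ℝ) :
    Tendsto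
      (fun n : ℕ => ‖P * (cfc g H * NormedSpace.exp ((Complex.I * (t : ℂ)) • H)) * Q n‖)
      atTop (nhds 0) := by
  have hnorm : IsStarNormal H := hH.isStarNormal
  set M : Subalgebra ℂ (ℋ →L[ℂ] ℋ) := (Algebra.adjoin ℂ {H}).topologicalClosure with hM
  have hMclosed : IsClosed (M : Set (ℋ →L[ℂ] ℋ)) :=
    (Algebra.adjoin ℂ {H}).isClosed_topologicalClosure
  have hHmem : H ∈ M :=
    (Algebra.adjoin ℂ {H}).le_topologicalClosure (Algebra.self_mem_adjoin_singleton ℂ H)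
  -- every cfcHom image is in M
  have hcfc_mem : ∀ f : C(spectrum ℂ H, ℂ), cfcHom hnorm f ∈ M := by
    intro f
    induction f using ContinuousMap.induction_on_of_compact with
    | const r =>
      have : (ContinuousMap.const (spectrum ℂ H) r) = algebraMap ℂ C(spectrum ℂ H, ℂ) r := rfl
      rw [this, AlgHomClass.commutes]
      exact M.algebraMap_mem r
    | id => rw [cfcHom_id hnorm]; exact hHmem
    | star_id => rw [map_star, cfcHom_id hnorm, hH.star_eq]; exact hHmem
    | add f₁ f₂ h₁ h₂ => rw [map_add]; exact M.add_mem h₁ h₂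
    | mul f₁ f₂ h₁ h₂ => rw [map_mul]; exact M.mul_mem h₁ h₂
    | frequently f hf =>
      have hcont : Continuous (cfcHom hnorm : C(spectrum ℂ H, ℂ) →⋆ₐ[ℂ] (ℋ →L[ℂ] ℋ)) :=
        cfcHom_continuous hnorm
      have : ∃ᶠ y in nhds (cfcHom hnorm f), y ∈ (M : Set (ℋ →L[ℂ] ℋ)) :=
        (hcont.tendsto f).frequently hf
      exact hMclosed.closure_subset (mem_closure_iff_frequently.2 this)
  have hg_mem : cfc g H ∈ M := by
    rw [cfc_apply g H hnorm hg.continuousOn]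
    exact hcfc_mem _
  -- exp is in M
  have hexp_mem : NormedSpace.exp ((Complex.I * (t : ℂ)) • H) ∈ M := by
    set c : ℂ := Complex.I * (t : ℂ)
    have hsum : Summable fun n : ℕ => ((n.factorial : ℂ)⁻¹ : ℂ) • (c • H) ^ n :=
      NormedSpace.expSeries_summable' (𝕂 := ℂ) (c • H)
    have hexp_eq : NormedSpace.exp (c • H)
        = ∑' n : ℕ, ((n.factorial : ℂ)⁻¹ : ℂ) • (c • H) ^ n := by
      rw [NormedSpace.exp_eq_tsum (𝕂 := ℂ)]
    rw [hexp_eq]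
    refine hMclosed.mem_of_tendsto hsum.hasSum (Filter.Eventually.of_forall fun s => ?_)
    refine M.sum_mem fun n _ => ?_
    refine M.smul_mem ?_ _
    rw [smul_pow]
    exact M.smul_mem (M.pow_mem hHmem n) _
  set A : ℋ →L[ℂ] ℋ := cfc g H * NormedSpace.exp ((Complex.I * (t : ℂ)) • H) with hA
  have hAmem : A ∈ M := M.mul_mem hg_mem hexp_mem
  have hAclos : A ∈ closure (Set.range fun p : Polynomial ℂ => Polynomial.aeval H p) := by
    have : ((Algebra.adjoin ℂ {H} : Subalgebra ℂ (ℋ →L[ℂ] ℋ)) : Set (ℋ →L[ℂ] ℋ))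
        = Set.range fun p : Polynomial ℂ => Polynomial.aeval H p := by
      rw [Algebra.adjoin_singleton_eq_range_aeval]
      rfl
    have h2 : A ∈ closure ((Algebra.adjoin ℂ {H} : Subalgebra ℂ (ℋ →L[ℂ] ℋ)) :
        Set (ℋ →L[ℂ] ℋ)) := hAmem
    rwa [this] at h2
  -- now the main estimate
  rw [Metric.tendsto_atTop]
  intro ε hε
  obtain ⟨y, ⟨p, rfl⟩, hy⟩ := Metric.mem_closure_iff.1 hAclos ε hε
  refine ⟨p.natDegree + 1, fun n hn => ?_⟩
  have hzero : P * Polynomial.aeval H p * Q n = 0 := by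
    rw [Polynomial.aeval_eq_sum_range, Finset.mul_sum, Finset.sum_mul]
    refine Finset.sum_eq_zero fun k hk => ?_
    have hk' : k < n := lt_of_lt_of_le (Finset.mem_range.1 hk) hn
    rw [mul_smul_comm, smul_mul_assoc, hstruct k n hk', smul_zero]
  have key : P * A * Q n = P * (A - Polynomial.aeval H p) * Q n := by
    rw [mul_sub, sub_mul, hzero, sub_zero]
  have hbound : ‖P * A * Q n‖ ≤ ‖A - Polynomial.aeval H p‖ := by
    rw [key]
    calc ‖P * (A - Polynomial.aeval H p) * Q n‖
        ≤ ‖P * (A - Polynomial.aeval H p)‖ * ‖Q n‖ := norm_mul_le _ _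
      _ ≤ ‖P‖ * ‖A - Polynomial.aeval H p‖ * ‖Q n‖ :=
          mul_le_mul_of_nonneg_right (norm_mul_le _ _) (norm_nonneg _)
      _ ≤ 1 * ‖A - Polynomial.aeval H p‖ * 1 := by
          gcongr
          · exact proj_norm_le_one hP.1 hP.2
          · exact proj_norm_le_one (hQ n).1 (hQ n).2
      _ = ‖A - Polynomial.aeval H p‖ := by ring
  have hd : dist A (Polynomial.aeval H p) < ε := hy
  rw [dist_eq_norm] at hd
  rw [Real.dist_eq, sub_zero, abs_of_nonneg (norm_nonneg _)]
  exact lt_of_le_of_lt hbound hd
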